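/- The sum ν₂₀ + ν₀₂ of normalized second-order central moments is invariant under translation, uniform scaling, and rotation of the image. -/

import Mathlib

open MeasureTheory Real

noncomputable section

/-- Geometric moment of order (p,q): m_{pq}(f) = ∫∫ x^p y^q f(x,y) dx dy. -/
def mom (f : ℝ × ℝ → ℝ) (p q : ℕ) : ℝ :=
  ∫ z : ℝ × ℝ, z.1 ^ p * z.2 ^ q * f z

/-- Centroid x-coordinate. -/
def xbar (f : ℝ × ℝ → ℝ) : ℝ := mom f 1 0 / mom f 0 0

/-- Centroid y-coordinate. -/
def ybar (f : ℝ × ℝ → ℝ) : ℝ := mom f 0 1 / mom f 0 0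

/-- Central moment μ_{pq}(f) about the centroid. -/
def cmom (f : ℝ × ℝ → ℝ) (p q : ℕ) : ℝ :=
  ∫ z : ℝ × ℝ, (z.1 - xbar f) ^ p * (z.2 - ybar f) ^ q * f z

/-- Normalized central moment ν_{pq}(f) = μ_{pq}(f) / μ₀₀(f)^{1+(p+q)/2}. -/
def nmom (f : ℝ × ℝ → ℝ) (p q : ℕ) : ℝ :=
  cmom f p q / (cmom f 0 0) ^ ((1 : ℝ) + (p + q : ℝ) / 2)

/-! ### Auxiliary machinery -/

/-- The linear part of the inverse similarity transformation. -/
def Lmap (s θ : ℝ) : (ℝ × ℝ) →ₗ[ℝ] (ℝ × ℝ) where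
  toFun w := ((w.1 * Real.cos θ + w.2 * Real.sin θ) / s,
              (-(w.1) * Real.sin θ + w.2 * Real.cos θ) / s)
  map_add' x y := by simp [Prod.ext_iff]; constructor <;> ring
  map_smul' c x := by simp [Prod.ext_iff, smul_eq_mul]; constructor <;> ring

lemma det_Lmap (s θ : ℝ) (hs : 0 < s) : LinearMap.det (Lmap s θ) = (s ^ 2)⁻¹ := by
  have : LinearMap.det (Lmap s θ)
      = Matrix.det ((LinearMap.toMatrix (Module.Basis.finTwoProd ℝ) (Module.Basis.finTwoProd ℝ)) (Lmap s θ)) :=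
    (LinearMap.det_toMatrix _ _).symm
  rw [this, Matrix.det_fin_two]
  simp [LinearMap.toMatrix_apply, Lmap, Module.Basis.finTwoProd_zero, Module.Basis.finTwoProd_one,
    Module.Basis.coe_finTwoProd_repr]
  field_simp
  nlinarith [Real.sin_sq_add_cos_sq θ]

lemma integral_comp_Lmap (s θ : ℝ) (hs : 0 < s) (h : ℝ × ℝ → ℝ) :
    ∫ z : ℝ × ℝ, h (Lmap s θ z) = s ^ 2 * ∫ z : ℝ × ℝ, h z := by
  have hdet : LinearMap.det (Lmap s θ) ≠ 0 := by
    rw [det_Lmap s θ hs]; positivity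
  let e := ((Lmap s θ).equivOfDetNeZero hdet).toContinuousLinearEquiv.toHomeomorph.toMeasurableEquiv
  have hmap : Measure.map e volume = ENNReal.ofReal (s ^ 2) • volume := by
    have h1 : Measure.map e volume = Measure.map (Lmap s θ) volume := rfl
    rw [h1, Measure.map_linearMap_addHaar_eq_smul_addHaar volume hdet, det_Lmap s θ hs]
    rw [inv_inv, abs_of_pos (by positivity : (0:ℝ) < s ^ 2)]
  calc ∫ z : ℝ × ℝ, h (Lmap s θ z) = ∫ z : ℝ × ℝ, h (e z) := rfl
    _ = ∫ z, h z ∂(Measure.map e volume) := (MeasureTheory.integral_map_equiv e h).symm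
    _ = (ENNReal.ofReal (s ^ 2)).toReal • ∫ z, h z := by rw [hmap, integral_smul_measure]
    _ = s ^ 2 * ∫ z, h z := by
        rw [ENNReal.toReal_ofReal (by positivity : (0:ℝ) ≤ s ^ 2), smul_eq_mul]

lemma integral_comp_T (s θ a b : ℝ) (hs : 0 < s) (h : ℝ × ℝ → ℝ) :
    ∫ z : ℝ × ℝ, h (Lmap s θ (z - (a, b))) = s ^ 2 * ∫ z : ℝ × ℝ, h z := by
  have := integral_sub_right_eq_self (μ := (volume : Measure (ℝ × ℝ)))
    (fun w => h (Lmap s θ w)) ((a, b) : ℝ × ℝ)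
  rw [show (fun z : ℝ × ℝ => h (Lmap s θ (z - (a, b))))
      = fun z : ℝ × ℝ => (fun w => h (Lmap s θ w)) (z - (a, b)) from rfl]
  rw [this, integral_comp_Lmap s θ hs]

section moments

variable (f : ℝ × ℝ → ℝ)

lemma integral_lin
    (hmom : ∀ p q : ℕ, p + q ≤ 2 → Integrable fun z : ℝ × ℝ => z.1 ^ p * z.2 ^ q * f z)
    (α β γ : ℝ) :
    ∫ w : ℝ × ℝ, (α * w.1 + β * w.2 + γ) * f w
      = α * mom f 1 0 + β * mom f 0 1 + γ * mom f 0 0 := by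
  have J1 := (hmom 1 0 (by norm_num)).const_mul α
  have J2 := (hmom 0 1 (by norm_num)).const_mul β
  have J3 := (hmom 0 0 (by norm_num)).const_mul γ
  have J12 : Integrable (fun w : ℝ × ℝ => α * (w.1 ^ 1 * w.2 ^ 0 * f w)
      + β * (w.1 ^ 0 * w.2 ^ 1 * f w)) (volume : Measure (ℝ × ℝ)) := J1.add J2
  have expand : (fun w : ℝ × ℝ => (α * w.1 + β * w.2 + γ) * f w)
      = fun w : ℝ × ℝ => α * (w.1 ^ 1 * w.2 ^ 0 * f w) + β * (w.1 ^ 0 * w.2 ^ 1 * f w)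
          + γ * (w.1 ^ 0 * w.2 ^ 0 * f w) := by
    funext w; ring
  rw [expand, integral_add J12 J3, integral_add J1 J2,
    integral_const_mul, integral_const_mul, integral_const_mul]
  simp only [mom]

lemma integral_quad
    (hmom : ∀ p q : ℕ, p + q ≤ 2 → Integrable fun z : ℝ × ℝ => z.1 ^ p * z.2 ^ q * f z)
    (α β γ : ℝ) :
    ∫ w : ℝ × ℝ, (α * w.1 + β * w.2 + γ) ^ 2 * f w
      = α ^ 2 * mom f 2 0 + 2 * α * β * mom f 1 1 + β ^ 2 * mom f 0 2
        + 2 * α * γ * mom f 1 0 + 2 * β * γ * mom f 0 1 + γ ^ 2 * mom f 0 0 := by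
  have J1 := (hmom 2 0 (by norm_num)).const_mul (α ^ 2)
  have J2 := (hmom 1 1 (by norm_num)).const_mul (2 * α * β)
  have J3 := (hmom 0 2 (by norm_num)).const_mul (β ^ 2)
  have J4 := (hmom 1 0 (by norm_num)).const_mul (2 * α * γ)
  have J5 := (hmom 0 1 (by norm_num)).const_mul (2 * β * γ)
  have J6 := (hmom 0 0 (by norm_num)).const_mul (γ ^ 2)
  have J12 : Integrable (fun w : ℝ × ℝ => α ^ 2 * (w.1 ^ 2 * w.2 ^ 0 * f w)
      + 2 * α * β * (w.1 ^ 1 * w.2 ^ 1 * f w)) (volume : Measure (ℝ × ℝ)) := J1.add J2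
  have J13 : Integrable (fun w : ℝ × ℝ => α ^ 2 * (w.1 ^ 2 * w.2 ^ 0 * f w)
      + 2 * α * β * (w.1 ^ 1 * w.2 ^ 1 * f w) + β ^ 2 * (w.1 ^ 0 * w.2 ^ 2 * f w))
      (volume : Measure (ℝ × ℝ)) := J12.add J3
  have J14 : Integrable (fun w : ℝ × ℝ => α ^ 2 * (w.1 ^ 2 * w.2 ^ 0 * f w)
      + 2 * α * β * (w.1 ^ 1 * w.2 ^ 1 * f w) + β ^ 2 * (w.1 ^ 0 * w.2 ^ 2 * f w)
      + 2 * α * γ * (w.1 ^ 1 * w.2 ^ 0 * f w)) (volume : Measure (ℝ × ℝ)) := J13.add J4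
  have J15 : Integrable (fun w : ℝ × ℝ => α ^ 2 * (w.1 ^ 2 * w.2 ^ 0 * f w)
      + 2 * α * β * (w.1 ^ 1 * w.2 ^ 1 * f w) + β ^ 2 * (w.1 ^ 0 * w.2 ^ 2 * f w)
      + 2 * α * γ * (w.1 ^ 1 * w.2 ^ 0 * f w) + 2 * β * γ * (w.1 ^ 0 * w.2 ^ 1 * f w))
      (volume : Measure (ℝ × ℝ)) := J14.add J5
  have expand : (fun w : ℝ × ℝ => (α * w.1 + β * w.2 + γ) ^ 2 * f w)
      = fun w : ℝ × ℝ =>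
          α ^ 2 * (w.1 ^ 2 * w.2 ^ 0 * f w) + 2 * α * β * (w.1 ^ 1 * w.2 ^ 1 * f w)
          + β ^ 2 * (w.1 ^ 0 * w.2 ^ 2 * f w) + 2 * α * γ * (w.1 ^ 1 * w.2 ^ 0 * f w)
          + 2 * β * γ * (w.1 ^ 0 * w.2 ^ 1 * f w) + γ ^ 2 * (w.1 ^ 0 * w.2 ^ 0 * f w) := by
    funext w; ring
  rw [expand, integral_add J15 J6, integral_add J14 J5, integral_add J13 J4,
    integral_add J12 J3, integral_add J1 J2,
    integral_const_mul, integral_const_mul, integral_const_mul,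
    integral_const_mul, integral_const_mul, integral_const_mul]
  simp only [mom]

end moments

/-- The first Hu invariant ν₂₀ + ν₀₂ is invariant under translation,
uniform scaling, and rotation. -/
theorem hu_invariant_phi1
    (f : ℝ × ℝ → ℝ) (a b s θ : ℝ) (hs : 0 < s)
    (hf : Integrable f)
    (hμ : 0 < cmom f 0 0)
    (hmom : ∀ p q : ℕ, p + q ≤ 2 →
      Integrable fun z : ℝ × ℝ => z.1 ^ p * z.2 ^ q * f z) :
    nmom (fun z : ℝ × ℝ =>
        f (((z.1 - a) / s) * Real.cos θ + ((z.2 - b) / s) * Real.sin θ,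
           -((z.1 - a) / s) * Real.sin θ + ((z.2 - b) / s) * Real.cos θ)) 2 0
      + nmom (fun z : ℝ × ℝ =>
        f (((z.1 - a) / s) * Real.cos θ + ((z.2 - b) / s) * Real.sin θ,
           -((z.1 - a) / s) * Real.sin θ + ((z.2 - b) / s) * Real.cos θ)) 0 2
      = nmom f 2 0 + nmom f 0 2 := by
  have hsne : s ≠ 0 := ne_of_gt hs
  have pyth := Real.sin_sq_add_cos_sq θ
  have hTz : ∀ z : ℝ × ℝ, Lmap s θ (z - (a, b))
      = (((z.1 - a) * Real.cos θ + (z.2 - b) * Real.sin θ) / s,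
         (-(z.1 - a) * Real.sin θ + (z.2 - b) * Real.cos θ) / s) := by
    intro z
    show ((((z - (a,b)).1 * Real.cos θ + (z - (a,b)).2 * Real.sin θ) / s,
      (-((z - (a,b)).1) * Real.sin θ + (z - (a,b)).2 * Real.cos θ) / s) : ℝ × ℝ) = _
    simp only [Prod.fst_sub, Prod.snd_sub]
  have hgfun : (fun z : ℝ × ℝ =>
      f (((z.1 - a) / s) * Real.cos θ + ((z.2 - b) / s) * Real.sin θ,
         -((z.1 - a) / s) * Real.sin θ + ((z.2 - b) / s) * Real.cos θ))
      = fun z : ℝ × ℝ => f (Lmap s θ (z - (a, b))) := by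
    funext z; rw [hTz z]
    exact congrArg f (Prod.ext (by ring) (by ring)).symm
  rw [hgfun]
  set g : ℝ × ℝ → ℝ := fun z : ℝ × ℝ => f (Lmap s θ (z - (a, b))) with hg
  have hu : ∀ z : ℝ × ℝ, s * Real.cos θ * (Lmap s θ (z - (a, b))).1
      - s * Real.sin θ * (Lmap s θ (z - (a, b))).2 + a = z.1 := by
    intro z; rw [hTz z]; field_simp; linear_combination (z.1 - a) * pyth
  have hv : ∀ z : ℝ × ℝ, s * Real.sin θ * (Lmap s θ (z - (a, b))).1
      + s * Real.cos θ * (Lmap s θ (z - (a, b))).2 + b = z.2 := by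
    intro z; rw [hTz z]; field_simp; linear_combination (z.2 - b) * pyth
  have hmg : ∀ p q : ℕ, mom g p q
      = s ^ 2 * ∫ w : ℝ × ℝ,
          (s * Real.cos θ * w.1 - s * Real.sin θ * w.2 + a) ^ p
          * (s * Real.sin θ * w.1 + s * Real.cos θ * w.2 + b) ^ q * f w := by
    intro p q
    have e1 : (fun z : ℝ × ℝ => z.1 ^ p * z.2 ^ q * g z)
        = fun z : ℝ × ℝ => (fun w : ℝ × ℝ =>
            (s * Real.cos θ * w.1 - s * Real.sin θ * w.2 + a) ^ p
            * (s * Real.sin θ * w.1 + s * Real.cos θ * w.2 + b) ^ q * f w)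
            (Lmap s θ (z - (a, b))) := by
      funext z; simp only [hg]
      rw [← hu z, ← hv z]
    rw [mom, e1]
    exact integral_comp_T s θ a b hs (fun w : ℝ × ℝ =>
      (s * Real.cos θ * w.1 - s * Real.sin θ * w.2 + a) ^ p
      * (s * Real.sin θ * w.1 + s * Real.cos θ * w.2 + b) ^ q * f w)
  have hcg : ∀ p q : ℕ, cmom g p q
      = s ^ 2 * ∫ w : ℝ × ℝ,
          (s * Real.cos θ * w.1 - s * Real.sin θ * w.2 + a - xbar g) ^ p
          * (s * Real.sin θ * w.1 + s * Real.cos θ * w.2 + b - ybar g) ^ q * f w := by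
    intro p q
    have e1 : (fun z : ℝ × ℝ => (z.1 - xbar g) ^ p * (z.2 - ybar g) ^ q * g z)
        = fun z : ℝ × ℝ => (fun w : ℝ × ℝ =>
            (s * Real.cos θ * w.1 - s * Real.sin θ * w.2 + a - xbar g) ^ p
            * (s * Real.sin θ * w.1 + s * Real.cos θ * w.2 + b - ybar g) ^ q * f w)
            (Lmap s θ (z - (a, b))) := by
      funext z; simp only [hg]
      rw [← hu z, ← hv z]
    rw [cmom, e1]
    exact integral_comp_T s θ a b hs (fun w : ℝ × ℝ =>
      (s * Real.cos θ * w.1 - s * Real.sin θ * w.2 + a - xbar g) ^ p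
      * (s * Real.sin θ * w.1 + s * Real.cos θ * w.2 + b - ybar g) ^ q * f w)
  -- basic moments of g
  have hm00 : mom g 0 0 = s ^ 2 * mom f 0 0 := by
    rw [hmg 0 0, mom]; simp only [pow_zero, one_mul]
  have hm10 : mom g 1 0 = s ^ 2 * ((s * Real.cos θ) * mom f 1 0
      + (-(s * Real.sin θ)) * mom f 0 1 + a * mom f 0 0) := by
    rw [hmg 1 0, ← integral_lin f hmom (s * Real.cos θ) (-(s * Real.sin θ)) a]
    congr 1; congr 1; funext w; ring
  have hm01 : mom g 0 1 = s ^ 2 * ((s * Real.sin θ) * mom f 1 0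
      + (s * Real.cos θ) * mom f 0 1 + b * mom f 0 0) := by
    rw [hmg 0 1, ← integral_lin f hmom (s * Real.sin θ) (s * Real.cos θ) b]
    congr 1; congr 1; funext w; ring
  have hc00f : cmom f 0 0 = mom f 0 0 := by simp [cmom, mom]
  have hm0 : 0 < mom f 0 0 := hc00f ▸ hμ
  have hm0ne : mom f 0 0 ≠ 0 := ne_of_gt hm0
  -- centroid of g
  have hX : xbar g = s * Real.cos θ * xbar f - s * Real.sin θ * ybar f + a := by
    rw [xbar, hm10, hm00, xbar, ybar]
    field_simp
    ring
  have hY : ybar g = s * Real.sin θ * xbar f + s * Real.cos θ * ybar f + b := by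
    rw [ybar, hm01, hm00, xbar, ybar]
    field_simp
  -- central moments
  have hc00g : cmom g 0 0 = s ^ 2 * cmom f 0 0 := by
    rw [show cmom g 0 0 = mom g 0 0 by simp [cmom, mom], hm00, hc00f]
  have e20 : cmom g 2 0 = s ^ 2 * ((s * Real.cos θ) ^ 2 * mom f 2 0
      + 2 * (s * Real.cos θ) * (-(s * Real.sin θ)) * mom f 1 1
      + (-(s * Real.sin θ)) ^ 2 * mom f 0 2
      + 2 * (s * Real.cos θ) * (a - xbar g) * mom f 1 0
      + 2 * (-(s * Real.sin θ)) * (a - xbar g) * mom f 0 1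
      + (a - xbar g) ^ 2 * mom f 0 0) := by
    rw [hcg 2 0, ← integral_quad f hmom (s * Real.cos θ) (-(s * Real.sin θ)) (a - xbar g)]
    congr 1; congr 1; funext w; ring
  have e02 : cmom g 0 2 = s ^ 2 * ((s * Real.sin θ) ^ 2 * mom f 2 0
      + 2 * (s * Real.sin θ) * (s * Real.cos θ) * mom f 1 1
      + (s * Real.cos θ) ^ 2 * mom f 0 2
      + 2 * (s * Real.sin θ) * (b - ybar g) * mom f 1 0
      + 2 * (s * Real.cos θ) * (b - ybar g) * mom f 0 1
      + (b - ybar g) ^ 2 * mom f 0 0) := by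
    rw [hcg 0 2, ← integral_quad f hmom (s * Real.sin θ) (s * Real.cos θ) (b - ybar g)]
    congr 1; congr 1; funext w; ring
  have f20 : cmom f 2 0 = (1 : ℝ) ^ 2 * mom f 2 0 + 2 * 1 * 0 * mom f 1 1 + (0:ℝ) ^ 2 * mom f 0 2
      + 2 * 1 * (-xbar f) * mom f 1 0 + 2 * 0 * (-xbar f) * mom f 0 1
      + (-xbar f) ^ 2 * mom f 0 0 := by
    rw [cmom, ← integral_quad f hmom 1 0 (-xbar f)]
    congr 1; funext w; ring
  have f02 : cmom f 0 2 = (0 : ℝ) ^ 2 * mom f 2 0 + 2 * 0 * 1 * mom f 1 1 + (1:ℝ) ^ 2 * mom f 0 2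
      + 2 * 0 * (-ybar f) * mom f 1 0 + 2 * 1 * (-ybar f) * mom f 0 1
      + (-ybar f) ^ 2 * mom f 0 0 := by
    rw [cmom, ← integral_quad f hmom 0 1 (-ybar f)]
    congr 1; funext w; ring
  -- the key rotational-invariance identity
  have hsum : cmom g 2 0 + cmom g 0 2 = s ^ 4 * (cmom f 2 0 + cmom f 0 2) := by
    rw [e20, e02, f20, f02, hX, hY]
    linear_combination (s ^ 4 * (mom f 2 0 + mom f 0 2 - 2 * xbar f * mom f 1 0
      - 2 * ybar f * mom f 0 1 + (xbar f ^ 2 + ybar f ^ 2) * mom f 0 0)) * pyth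
  -- finish
  have hcg0 : (0:ℝ) < cmom g 0 0 := by rw [hc00g]; positivity
  have hexp : ∀ x : ℝ, 0 < x → ∀ p q : ℕ, p + q = 2 →
      x ^ ((1 : ℝ) + (p + q : ℝ) / 2) = x ^ 2 := by
    intro x hx p q hpq
    have h2 : ((p : ℝ) + (q : ℝ)) = 2 := by exact_mod_cast hpq
    rw [show (1 : ℝ) + ((p : ℝ) + (q : ℝ)) / 2 = ((2 : ℕ) : ℝ) by rw [h2]; norm_num,
      Real.rpow_natCast]
  rw [nmom, nmom, nmom, nmom,
    hexp _ hcg0 2 0 rfl, hexp _ hcg0 0 2 rfl, hexp _ hμ 2 0 rfl, hexp _ hμ 0 2 rfl,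
    ← add_div, ← add_div, hsum, hc00g]
  rw [mul_pow, show ((s:ℝ) ^ 2) ^ 2 = s ^ 4 by ring,
    mul_div_mul_left _ _ (by positivity : (s:ℝ) ^ 4 ≠ 0)]
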